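/- arXiv:1509.05477 — 2 statements merged into one kernel-verified Lean document; each statement's English description precedes it below -/
import Mathlib

section
/- Fix integers 3 ≤ l < r, p ∈ (0,1), and ρ ∈ [0,1]. Define α^BSC(ρ,η) = max_{(x₀,x_c,y)∈D(ρ)} [f(x₀,x_c,y,ρ) + k(x₀,x_c,ρ,p) − 2η((1−ρ)x₀ + ρx_c)]. If for η = 0 this maximum is achieved only at the point (x₀,x_c,y) = (0,0,0), then there exists η̃ < 0 such that α^BSC(ρ,η) = 0 for all η > η̃. -/
open Finset

noncomputable section

/-- Binary entropy in nats, with the convention `0 * log 0 = 0`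
(automatic since `Real.log 0 = 0`). -/
def h2 (x : ℝ) : ℝ := -x * Real.log x - (1 - x) * Real.log (1 - x)

/-- Membership in the domain `D(ρ) ⊆ [0,1]^{2+⌊r/2⌋}`.  The coordinate `y t`
for `t : Fin (r/2)` represents `y_{t+1}`, the fraction of check nodes of
induced degree `2*(t+1)`. -/
def memD (r : ℕ) (ρ x₀ xc : ℝ) (y : Fin (r / 2) → ℝ) : Prop :=
  x₀ ∈ Set.Icc (0 : ℝ) 1 ∧ xc ∈ Set.Icc (0 : ℝ) 1 ∧ (∀ t, y t ∈ Set.Icc (0 : ℝ) 1) ∧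
    (∑ t, y t) ≤ 1 ∧
    (∑ t : Fin (r / 2), (2 * ((t : ℕ) + 1) : ℝ) / (r : ℝ) * y t) = (1 - ρ) * x₀ + ρ * xc

/-- The growth-rate function `f(x₀, x_c, y, ρ)`. -/
def fFun (l r : ℕ) (x₀ xc : ℝ) (y : Fin (r / 2) → ℝ) (ρ : ℝ) : ℝ :=
  -(l : ℝ) * h2 ((1 - ρ) * x₀ + ρ * xc) + (1 - ρ) * h2 x₀ + ρ * h2 xc
    - (l : ℝ) / (r : ℝ) * ((1 - ∑ t, y t) * Real.log (1 - ∑ t, y t))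
    - (l : ℝ) / (r : ℝ) * ∑ t, y t * Real.log (y t)
    + (l : ℝ) / (r : ℝ) *
        ∑ t : Fin (r / 2), y t * Real.log (Nat.choose r (2 * ((t : ℕ) + 1)))

/-- The auxiliary function `k(x₀, x_c, ρ, p) = (ρ x_c - (1-ρ) x₀) ln((1-p)/p)`. -/
def kFun (x₀ xc ρ p : ℝ) : ℝ := (ρ * xc - (1 - ρ) * x₀) * Real.log ((1 - p) / p)

/-- The leading exponent of the loop series for the BSC:
`α^BSC(ρ,η) = max_{(x₀,x_c,y) ∈ D(ρ)} [f + k - 2η((1-ρ)x₀ + ρ x_c)]`,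
formalized as a supremum over the (compact) domain `D(ρ)`. -/
def alphaBSC (l r : ℕ) (p ρ η : ℝ) : ℝ :=
  sSup {z : ℝ | ∃ (x₀ xc : ℝ) (y : Fin (r / 2) → ℝ), memD r ρ x₀ xc y ∧
    z = fFun l r x₀ xc y ρ + kFun x₀ xc ρ p - 2 * η * ((1 - ρ) * x₀ + ρ * xc)}


set_option maxHeartbeats 1000000

-- Gibbs inequality
lemma gibbs {x q : ℝ} (hx : 0 ≤ x) (hq : 0 < q) :
    -(x * Real.log x) ≤ -(x * Real.log q) + q := by
  rcases eq_or_lt_of_le hx with h | hx'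
  · simp [← h, hq.le]
  · have h1 : Real.log q - Real.log x ≤ q / x - 1 := by
      have := Real.log_le_sub_one_of_pos (div_pos hq hx')
      rwa [Real.log_div hq.ne' hx'.ne'] at this
    have h2 : x * (Real.log q - Real.log x) ≤ x * (q / x - 1) :=
      mul_le_mul_of_nonneg_left h1 hx'.le
    have h3 : x * (q / x - 1) = q - x := by field_simp
    nlinarith

lemma neg_one_sub_mul_log_le {x : ℝ} (h0 : 0 ≤ x) (h1 : x ≤ 1) :
    -((1 - x) * Real.log (1 - x)) ≤ x := by
  rcases eq_or_lt_of_le h1 with h | h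
  · simp [h]
  · have hx1 : 0 < 1 - x := by linarith
    have hA := Real.log_le_sub_one_of_pos (inv_pos.2 hx1)
    rw [Real.log_inv] at hA
    have hB : (1 - x) * (-Real.log (1 - x)) ≤ (1 - x) * ((1 - x)⁻¹ - 1) :=
      mul_le_mul_of_nonneg_left hA hx1.le
    have hC : (1 - x) * ((1 - x)⁻¹ - 1) = x := by field_simp; ring
    nlinarith

def Cb (l r : ℕ) (p : ℝ) : ℝ :=
  4 + l + ((l : ℝ) * r / 2) * Real.log r + |Real.log ((1 - p) / p)|

lemma mul_nonpos'' {a b : ℝ} (ha : 0 ≤ a) (hb : b ≤ 0) : a * b ≤ 0 := by nlinarith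

lemma key_bound (l r : ℕ) (hl : 3 ≤ l) (hlr : l < r) (p ρ : ℝ)
    (hρ : ρ ∈ Set.Icc (0 : ℝ) 1)
    (x₀ xc : ℝ) (y : Fin (r / 2) → ℝ) (hD : memD r ρ x₀ xc y)
    (hs_pos : 0 < (1 - ρ) * x₀ + ρ * xc) (hs_half : (1 - ρ) * x₀ + ρ * xc ≤ 1 / 2) :
    fFun l r x₀ xc y ρ + kFun x₀ xc ρ p ≤
      (1 / 2) * (((1 - ρ) * x₀ + ρ * xc) * Real.log ((1 - ρ) * x₀ + ρ * xc))
        + Cb l r p * ((1 - ρ) * x₀ + ρ * xc) := by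
  obtain ⟨hx₀, hxc, hy, hsum, hcon⟩ := hD
  have hrpos : 0 < r := by omega
  have hr0 : (0 : ℝ) < r := by exact_mod_cast hrpos
  have hρ0 : 0 ≤ ρ := hρ.1
  have hρ1 : ρ ≤ 1 := hρ.2
  set s : ℝ := (1 - ρ) * x₀ + ρ * xc with hs_def
  set m : ℝ := ∑ t, y t with hm_def
  have hs0 : 0 ≤ s := hs_pos.le
  have hLs0 : Real.log s ≤ 0 := Real.log_nonpos hs0 (by linarith)
  have hsLs : s * Real.log s ≤ 0 := mul_nonpos'' hs0 hLs0
  have hl3 : (3 : ℝ) ≤ l := by exact_mod_cast hl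
  have hT : (∑ t : Fin (r / 2), (((t : ℕ) + 1 : ℝ)) * y t) = (r : ℝ) / 2 * s := by
    have h := congrArg (fun z => (r : ℝ) / 2 * z) hcon
    simp only [Finset.mul_sum] at h
    rw [← h]
    refine Finset.sum_congr rfl fun t _ => ?_
    field_simp
  have hm0 : 0 ≤ m := Finset.sum_nonneg fun t _ => (hy t).1
  have hm_le : m ≤ (r : ℝ) / 2 * s := by
    rw [← hT, hm_def]
    refine Finset.sum_le_sum fun t _ => ?_
    nlinarith [(hy t).1, Nat.cast_nonneg (α := ℝ) (t : ℕ)]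
  -- Piece 1
  have hP1 : -(l : ℝ) * h2 s ≤ (l : ℝ) * (s * Real.log s) := by
    have h1 : (1 - s) * Real.log (1 - s) ≤ 0 :=
      mul_nonpos'' (by linarith) (Real.log_nonpos (by linarith) (by linarith))
    simp only [h2]
    nlinarith
  -- Piece 2
  have h2a : (1 - ρ) * h2 x₀ ≤ (1 - ρ) * (-(x₀ * Real.log s) + s + x₀) := by
    refine mul_le_mul_of_nonneg_left ?_ (by linarith)
    have hga := gibbs hx₀.1 hs_pos
    have hgb := neg_one_sub_mul_log_le hx₀.1 hx₀.2
    simp only [h2]; nlinarith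
  have h2b : ρ * h2 xc ≤ ρ * (-(xc * Real.log s) + s + xc) := by
    refine mul_le_mul_of_nonneg_left ?_ hρ0
    have hga := gibbs hxc.1 hs_pos
    have hgb := neg_one_sub_mul_log_le hxc.1 hxc.2
    simp only [h2]; nlinarith
  have hP2 : (1 - ρ) * h2 x₀ + ρ * h2 xc ≤ -(s * Real.log s) + 2 * s := by
    have e : (1 - ρ) * (-(x₀ * Real.log s) + s + x₀) + ρ * (-(xc * Real.log s) + s + xc)
        = -(s * Real.log s) + 2 * s := by rw [hs_def]; ring
    linarith
  -- Piece 3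
  have h3a : -((1 - m) * Real.log (1 - m)) ≤ m := neg_one_sub_mul_log_le hm0 hsum
  have hP3 : -((l : ℝ) / r) * ((1 - m) * Real.log (1 - m)) ≤ (l : ℝ) / 2 * s := by
    calc -((l : ℝ) / r) * ((1 - m) * Real.log (1 - m))
        = ((l : ℝ) / r) * (-((1 - m) * Real.log (1 - m))) := by ring
      _ ≤ ((l : ℝ) / r) * m := mul_le_mul_of_nonneg_left h3a (by positivity)
      _ ≤ ((l : ℝ) / r) * ((r : ℝ) / 2 * s) := mul_le_mul_of_nonneg_left hm_le (by positivity)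
      _ = (l : ℝ) / 2 * s := by field_simp
  -- Piece 4
  have h4a : ∀ t : Fin (r / 2), -(y t * Real.log (y t)) ≤
      (((t : ℕ) + 1 : ℝ)) * y t * (-(Real.log s)) + s := by
    intro t
    have hg := gibbs (hy t).1 (pow_pos hs_pos ((t : ℕ) + 1))
    have hlp : Real.log (s ^ ((t : ℕ) + 1)) = (((t : ℕ) + 1 : ℕ) : ℝ) * Real.log s :=
      Real.log_pow _ _
    have hsp : s ^ ((t : ℕ) + 1) ≤ s := pow_le_of_le_one hs0 (by linarith) (by omega)
    calc -(y t * Real.log (y t)) ≤ -(y t * Real.log (s ^ ((t : ℕ) + 1))) + s ^ ((t : ℕ) + 1) := hg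
      _ = (((t : ℕ) + 1 : ℝ)) * y t * (-(Real.log s)) + s ^ ((t : ℕ) + 1) := by
          rw [hlp]; push_cast; ring
      _ ≤ _ := by linarith
  have h4b : -(∑ t, y t * Real.log (y t)) ≤ (r : ℝ) / 2 * s * (-(Real.log s)) + (r : ℝ) / 2 * s := by
    have hsle : ∑ t : Fin (r / 2), -(y t * Real.log (y t)) ≤
        ∑ t : Fin (r / 2), ((((t : ℕ) + 1 : ℝ)) * y t * (-(Real.log s)) + s) :=
      Finset.sum_le_sum fun t _ => h4a t
    rw [Finset.sum_add_distrib, ← Finset.sum_mul, hT] at hsle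
    simp only [Finset.sum_const, Finset.card_univ, Fintype.card_fin, nsmul_eq_mul] at hsle
    rw [Finset.sum_neg_distrib] at hsle
    have hcard : ((r / 2 : ℕ) : ℝ) ≤ (r : ℝ) / 2 := Nat.cast_div_le
    have h2' : ((r / 2 : ℕ) : ℝ) * s ≤ (r : ℝ) / 2 * s := mul_le_mul_of_nonneg_right hcard hs0
    linarith
  have hP4 : -((l : ℝ) / r) * (∑ t, y t * Real.log (y t)) ≤
      -((l : ℝ) / 2) * (s * Real.log s) + (l : ℝ) / 2 * s := by
    calc -((l : ℝ) / r) * (∑ t, y t * Real.log (y t))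
        = ((l : ℝ) / r) * (-(∑ t, y t * Real.log (y t))) := by ring
      _ ≤ ((l : ℝ) / r) * ((r : ℝ) / 2 * s * (-(Real.log s)) + (r : ℝ) / 2 * s) :=
          mul_le_mul_of_nonneg_left h4b (by positivity)
      _ = -((l : ℝ) / 2) * (s * Real.log s) + (l : ℝ) / 2 * s := by field_simp
  -- Piece 5
  have hlogr : 0 ≤ Real.log r := Real.log_nonneg (by exact_mod_cast hrpos)
  have hch : ∀ t : Fin (r / 2), Real.log (Nat.choose r (2 * ((t : ℕ) + 1))) ≤
      (r : ℝ) * Real.log r := by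
    intro t
    have hk : 2 * ((t : ℕ) + 1) ≤ r := by have := t.2; omega
    rcases Nat.eq_zero_or_pos (Nat.choose r (2 * ((t : ℕ) + 1))) with h | h
    · rw [h]
      simpa using mul_nonneg (le_of_lt hr0) hlogr
    · have h1 : ((Nat.choose r (2 * ((t : ℕ) + 1)) : ℕ) : ℝ) ≤ (r : ℝ) ^ (2 * ((t : ℕ) + 1)) := by
        exact_mod_cast Nat.choose_le_pow r (2 * ((t : ℕ) + 1))
      calc Real.log (Nat.choose r (2 * ((t : ℕ) + 1)))
          ≤ Real.log ((r : ℝ) ^ (2 * ((t : ℕ) + 1))) := Real.log_le_log (by exact_mod_cast h) h1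
        _ = ((2 * ((t : ℕ) + 1) : ℕ) : ℝ) * Real.log r := Real.log_pow _ _
        _ ≤ (r : ℝ) * Real.log r := mul_le_mul_of_nonneg_right (by exact_mod_cast hk) hlogr
  have hP5 : ((l : ℝ) / r) * (∑ t, y t * Real.log (Nat.choose r (2 * ((t : ℕ) + 1)))) ≤
      ((l : ℝ) * r / 2) * Real.log r * s := by
    have h5a : (∑ t, y t * Real.log (Nat.choose r (2 * ((t : ℕ) + 1)))) ≤
        ∑ t : Fin (r / 2), y t * ((r : ℝ) * Real.log r) :=
      Finset.sum_le_sum fun t _ => mul_le_mul_of_nonneg_left (hch t) (hy t).1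
    rw [← Finset.sum_mul, ← hm_def] at h5a
    have h5b : m * ((r : ℝ) * Real.log r) ≤ ((r : ℝ) / 2 * s) * ((r : ℝ) * Real.log r) :=
      mul_le_mul_of_nonneg_right hm_le (by positivity)
    calc ((l : ℝ) / r) * (∑ t, y t * Real.log (Nat.choose r (2 * ((t : ℕ) + 1))))
        ≤ ((l : ℝ) / r) * (((r : ℝ) / 2 * s) * ((r : ℝ) * Real.log r)) := by
          apply mul_le_mul_of_nonneg_left _ (by positivity)
          exact le_trans h5a h5b
      _ = ((l : ℝ) * r / 2) * Real.log r * s := by field_simp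
  -- Piece 6
  have hu0 : 0 ≤ (1 - ρ) * x₀ := mul_nonneg (by linarith) hx₀.1
  have hv0 : 0 ≤ ρ * xc := mul_nonneg hρ0 hxc.1
  have hP6 : kFun x₀ xc ρ p ≤ |Real.log ((1 - p) / p)| * s := by
    have habs : |ρ * xc - (1 - ρ) * x₀| ≤ s := by
      rw [abs_le]
      constructor <;> (rw [hs_def]; linarith)
    calc kFun x₀ xc ρ p = (ρ * xc - (1 - ρ) * x₀) * Real.log ((1 - p) / p) := rfl
      _ ≤ |(ρ * xc - (1 - ρ) * x₀) * Real.log ((1 - p) / p)| := le_abs_self _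
      _ = |ρ * xc - (1 - ρ) * x₀| * |Real.log ((1 - p) / p)| := abs_mul _ _
      _ ≤ s * |Real.log ((1 - p) / p)| := mul_le_mul_of_nonneg_right habs (abs_nonneg _)
      _ = |Real.log ((1 - p) / p)| * s := mul_comm _ _
  -- assemble
  have expand : fFun l r x₀ xc y ρ + kFun x₀ xc ρ p =
      (-(l : ℝ) * h2 s) + ((1 - ρ) * h2 x₀ + ρ * h2 xc)
      + (-((l : ℝ) / r) * ((1 - m) * Real.log (1 - m)))
      + (-((l : ℝ) / r) * (∑ t, y t * Real.log (y t)))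
      + (((l : ℝ) / r) * (∑ t, y t * Real.log (Nat.choose r (2 * ((t : ℕ) + 1)))))
      + kFun x₀ xc ρ p := by
    unfold fFun
    rw [← hs_def, ← hm_def]
    ring
  have hkey : ((l : ℝ) - 3) * (s * Real.log s) ≤ 0 := mul_nonpos'' (by linarith) hsLs
  rw [expand, Cb]
  nlinarith [hP1, hP2, hP3, hP4, hP5, hP6, hkey, hs0]

lemma fk0 (l r : ℕ) (p ρ : ℝ) : fFun l r 0 0 0 ρ + kFun 0 0 ρ p = 0 := by
  simp [fFun, kFun, h2]

lemma fk_eq_zero_of_s_eq_zero (l r : ℕ) (hr : 0 < r) (p ρ : ℝ)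
    (hρ : ρ ∈ Set.Icc (0 : ℝ) 1)
    (x₀ xc : ℝ) (y : Fin (r / 2) → ℝ) (hD : memD r ρ x₀ xc y)
    (hs : (1 - ρ) * x₀ + ρ * xc = 0) :
    fFun l r x₀ xc y ρ + kFun x₀ xc ρ p = 0 := by
  obtain ⟨hx₀, hxc, hy, hsum, hcon⟩ := hD
  have hρ0 := hρ.1
  have hρ1 := hρ.2
  have hu0 : 0 ≤ (1 - ρ) * x₀ := mul_nonneg (by linarith) hx₀.1
  have hv0 : 0 ≤ ρ * xc := mul_nonneg hρ0 hxc.1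
  have hu : (1 - ρ) * x₀ = 0 := by linarith
  have hv : ρ * xc = 0 := by linarith
  have hr0 : (0 : ℝ) < r := by exact_mod_cast hr
  have hy0 : ∀ t, y t = 0 := by
    have hnn : ∀ t ∈ Finset.univ (α := Fin (r / 2)),
        0 ≤ (2 * ((t : ℕ) + 1) : ℝ) / r * y t := fun t _ =>
      mul_nonneg (div_nonneg (by positivity) hr0.le) (hy t).1
    have hzero : (∑ t : Fin (r / 2), (2 * ((t : ℕ) + 1) : ℝ) / r * y t) = 0 := by
      rw [hcon, hs]
    have hterm := (Finset.sum_eq_zero_iff_of_nonneg hnn).1 hzero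
    intro t
    have h := hterm t (Finset.mem_univ t)
    have hc : ((2 * ((t : ℕ) + 1) : ℝ) / r) ≠ 0 := div_ne_zero (by positivity) hr0.ne'
    exact (mul_eq_zero.1 h).resolve_left hc
  have hsum0 : (∑ t, y t) = 0 := Finset.sum_eq_zero fun t _ => hy0 t
  have h1 : (1 - ρ) * h2 x₀ = 0 := by
    rcases mul_eq_zero.1 hu with h | h
    · rw [h, zero_mul]
    · rw [h]; simp [h2]
  have h2' : ρ * h2 xc = 0 := by
    rcases mul_eq_zero.1 hv with h | h
    · rw [h, zero_mul]
    · rw [h]; simp [h2]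
  have hA : (∑ t, y t * Real.log (y t)) = 0 :=
    Finset.sum_eq_zero fun t _ => by rw [hy0 t, zero_mul]
  have hB : (∑ t : Fin (r / 2), y t * Real.log (Nat.choose r (2 * ((t : ℕ) + 1)))) = 0 :=
    Finset.sum_eq_zero fun t _ => by rw [hy0 t, zero_mul]
  unfold fFun kFun
  rw [hs, hsum0, hA, hB, h1, h2', hu, hv]
  simp [h2]

lemma small_bound (l r : ℕ) (hl : 3 ≤ l) (hlr : l < r) (p ρ : ℝ)
    (hρ : ρ ∈ Set.Icc (0 : ℝ) 1)
    (x₀ xc : ℝ) (y : Fin (r / 2) → ℝ) (hD : memD r ρ x₀ xc y)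
    (hsle : (1 - ρ) * x₀ + ρ * xc ≤ min (1 / 2) (Real.exp (-(2 * Cb l r p + 2)))) :
    fFun l r x₀ xc y ρ + kFun x₀ xc ρ p ≤ -((1 - ρ) * x₀ + ρ * xc) := by
  have hu0 : 0 ≤ (1 - ρ) * x₀ := mul_nonneg (by linarith [hρ.2]) hD.1.1
  have hv0 : 0 ≤ ρ * xc := mul_nonneg hρ.1 hD.2.1.1
  have hs0 : 0 ≤ (1 - ρ) * x₀ + ρ * xc := by linarith
  rcases eq_or_lt_of_le hs0 with h | hpos
  · have h0 := fk_eq_zero_of_s_eq_zero l r (by omega) p ρ hρ x₀ xc y hD h.symm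
    rw [h0, ← h]; norm_num
  · have hkb := key_bound l r hl hlr p ρ hρ x₀ xc y hD hpos
      (le_trans hsle (min_le_left _ _))
    have hlog : Real.log ((1 - ρ) * x₀ + ρ * xc) ≤ -(2 * Cb l r p + 2) := by
      calc Real.log ((1 - ρ) * x₀ + ρ * xc)
          ≤ Real.log (Real.exp (-(2 * Cb l r p + 2))) :=
            Real.log_le_log hpos (le_trans hsle (min_le_right _ _))
        _ = -(2 * Cb l r p + 2) := Real.log_exp _
    have hstep : (1 / 2 : ℝ) * (((1 - ρ) * x₀ + ρ * xc) * Real.log ((1 - ρ) * x₀ + ρ * xc)) ≤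
        (1 / 2) * (((1 - ρ) * x₀ + ρ * xc) * (-(2 * Cb l r p + 2))) := by
      apply mul_le_mul_of_nonneg_left _ (by norm_num)
      exact mul_le_mul_of_nonneg_left hlog hs0
    nlinarith [hkb]

lemma continuous_h2 : Continuous h2 := by
  have e : h2 = fun x => -(x * Real.log x) - (1 - x) * Real.log (1 - x) := by
    funext x; simp only [h2]; ring
  rw [e]
  exact (Real.continuous_mul_log.neg).sub
    (Real.continuous_mul_log.comp (continuous_const.sub continuous_id))

lemma exists_neg_bound (l r : ℕ) (hr : 0 < r) (p ρ : ℝ)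
    (hmax : ∀ (x₀ xc : ℝ) (y : Fin (r / 2) → ℝ), memD r ρ x₀ xc y →
      ¬(x₀ = 0 ∧ xc = 0 ∧ y = 0) →
      fFun l r x₀ xc y ρ + kFun x₀ xc ρ p < fFun l r 0 0 0 ρ + kFun 0 0 ρ p)
    {ε : ℝ} (hε : 0 < ε) :
    ∃ c : ℝ, 0 < c ∧ ∀ (x₀ xc : ℝ) (y : Fin (r / 2) → ℝ), memD r ρ x₀ xc y →
      ε ≤ (1 - ρ) * x₀ + ρ * xc →
      fFun l r x₀ xc y ρ + kFun x₀ xc ρ p ≤ -c := by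
  classical
  set T : Set (ℝ × ℝ × (Fin (r / 2) → ℝ)) :=
    {q | memD r ρ q.1 q.2.1 q.2.2 ∧ ε ≤ (1 - ρ) * q.1 + ρ * q.2.1} with hT_def
  by_cases hne : T.Nonempty
  · have hy : ∀ t : Fin (r / 2), Continuous fun q : ℝ × ℝ × (Fin (r / 2) → ℝ) => q.2.2 t :=
      fun t => (continuous_apply t).comp (continuous_snd.comp continuous_snd)
    have hxc : Continuous fun q : ℝ × ℝ × (Fin (r / 2) → ℝ) => q.2.1 :=
      continuous_fst.comp continuous_snd
    have hsumc : Continuous fun q : ℝ × ℝ × (Fin (r / 2) → ℝ) => ∑ t, q.2.2 t :=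
      continuous_finset_sum _ fun t _ => hy t
    have hsc : Continuous fun q : ℝ × ℝ × (Fin (r / 2) → ℝ) => (1 - ρ) * q.1 + ρ * q.2.1 :=
      (continuous_const.mul continuous_fst).add (continuous_const.mul hxc)
    have hwc : Continuous fun q : ℝ × ℝ × (Fin (r / 2) → ℝ) =>
        ∑ t : Fin (r / 2), (2 * ((t : ℕ) + 1) : ℝ) / (r : ℝ) * q.2.2 t :=
      continuous_finset_sum _ fun t _ => continuous_const.mul (hy t)
    have hTclosed : IsClosed T := by
      have e : T = (Set.Icc (0 : ℝ) 1 ×ˢ (Set.Icc (0 : ℝ) 1 ×ˢ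
            Set.pi Set.univ fun _ : Fin (r / 2) => Set.Icc (0 : ℝ) 1))
          ∩ {q | (∑ t, q.2.2 t) ≤ 1}
          ∩ {q | (∑ t : Fin (r / 2), (2 * ((t : ℕ) + 1) : ℝ) / (r : ℝ) * q.2.2 t)
              = (1 - ρ) * q.1 + ρ * q.2.1}
          ∩ {q | ε ≤ (1 - ρ) * q.1 + ρ * q.2.1} := by
        ext q
        simp only [hT_def, memD, Set.mem_setOf_eq, Set.mem_inter_iff, Set.mem_prod,
          Set.mem_pi, Set.mem_univ, forall_true_left, Set.mem_Icc]
        tauto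
      rw [e]
      exact (((isClosed_Icc.prod (isClosed_Icc.prod
          (isClosed_set_pi fun i _ => isClosed_Icc))).inter
        (isClosed_le hsumc continuous_const)).inter (isClosed_eq hwc hsc)).inter
        (isClosed_le continuous_const hsc)
    have hbox : IsCompact ((Set.Icc (0 : ℝ) 1) ×ˢ ((Set.Icc (0 : ℝ) 1) ×ˢ
        (Set.pi Set.univ fun _ : Fin (r / 2) => Set.Icc (0 : ℝ) 1))) :=
      isCompact_Icc.prod (isCompact_Icc.prod (isCompact_univ_pi fun _ => isCompact_Icc))
    have hTcompact : IsCompact T := by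
      refine IsCompact.of_isClosed_subset hbox hTclosed ?_
      rintro q ⟨hD, -⟩
      exact ⟨hD.1, hD.2.1, fun t _ => hD.2.2.1 t⟩
    have hFc : Continuous fun q : ℝ × ℝ × (Fin (r / 2) → ℝ) =>
        fFun l r q.1 q.2.1 q.2.2 ρ + kFun q.1 q.2.1 ρ p := by
      unfold fFun kFun
      exact (Continuous.add (Continuous.sub (Continuous.sub (Continuous.add (Continuous.add
        (continuous_const.mul (continuous_h2.comp hsc))
        (continuous_const.mul (continuous_h2.comp continuous_fst)))
        (continuous_const.mul (continuous_h2.comp hxc)))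
        (continuous_const.mul (Real.continuous_mul_log.comp (continuous_const.sub hsumc))))
        (continuous_const.mul
          (continuous_finset_sum _ fun t _ => Real.continuous_mul_log.comp (hy t))))
        (continuous_const.mul
          (continuous_finset_sum _ fun t _ => (hy t).mul continuous_const))).add
        (((continuous_const.mul hxc).sub (continuous_const.mul continuous_fst)).mul
          continuous_const)
    obtain ⟨q, hqT, hqmax⟩ := hTcompact.exists_isMaxOn hne hFc.continuousOn
    refine ⟨-(fFun l r q.1 q.2.1 q.2.2 ρ + kFun q.1 q.2.1 ρ p), ?_, ?_⟩
    · have hne0 : ¬(q.1 = 0 ∧ q.2.1 = 0 ∧ q.2.2 = 0) := by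
        rintro ⟨h1, h2, -⟩
        have hεq := hqT.2
        rw [h1, h2] at hεq
        simp only [mul_zero, add_zero] at hεq
        linarith
      have hlt := hmax q.1 q.2.1 q.2.2 hqT.1 hne0
      rw [fk0] at hlt
      linarith
    · intro x₀ xc y hD hεs
      have hmem : (x₀, xc, y) ∈ T := ⟨hD, hεs⟩
      have hle := isMaxOn_iff.1 hqmax _ hmem
      rw [neg_neg]
      exact hle
  · refine ⟨1, one_pos, fun x₀ xc y hD hεs => absurd ⟨(x₀, xc, y), hD, hεs⟩ hne⟩

/-- **Lemma 1 (BSC case).**  If for `η = 0` the maximum of the loop-series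
exponent over `D(ρ)` is achieved only at `(x₀, x_c, y) = (0,0,0)`, then there
exists `η̃ < 0` such that `α^BSC(ρ,η) = 0` for all `η > η̃`. -/
theorem alphaBSC_eq_zero_near_zero (l r : ℕ) (hl : 3 ≤ l) (hlr : l < r)
    (p : ℝ) (hp : p ∈ Set.Ioo (0 : ℝ) 1) (ρ : ℝ) (hρ : ρ ∈ Set.Icc (0 : ℝ) 1)
    (hmax : ∀ (x₀ xc : ℝ) (y : Fin (r / 2) → ℝ), memD r ρ x₀ xc y →
      ¬(x₀ = 0 ∧ xc = 0 ∧ y = 0) →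
      fFun l r x₀ xc y ρ + kFun x₀ xc ρ p < fFun l r 0 0 0 ρ + kFun 0 0 ρ p) :
    ∃ ηt : ℝ, ηt < 0 ∧ ∀ η : ℝ, ηt < η → alphaBSC l r p ρ η = 0 := by
  have hε : 0 < min (1 / 2 : ℝ) (Real.exp (-(2 * Cb l r p + 2))) :=
    lt_min (by norm_num) (Real.exp_pos _)
  obtain ⟨c, hc0, hbig⟩ := exists_neg_bound l r (by omega) p ρ hmax hε
  have hM : 0 < min (1 / 2 : ℝ) (c / 2) := lt_min (by norm_num) (by positivity)
  refine ⟨-(min (1 / 2 : ℝ) (c / 2)), neg_lt_zero.2 hM, fun η hη => ?_⟩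
  have hpoint : ∀ (x₀ xc : ℝ) (y : Fin (r / 2) → ℝ), memD r ρ x₀ xc y →
      fFun l r x₀ xc y ρ + kFun x₀ xc ρ p - 2 * η * ((1 - ρ) * x₀ + ρ * xc) ≤ 0 := by
    intro x₀ xc y hD
    have hu0 : 0 ≤ (1 - ρ) * x₀ := mul_nonneg (by linarith [hρ.2]) hD.1.1
    have hv0 : 0 ≤ ρ * xc := mul_nonneg hρ.1 hD.2.1.1
    have hu1 : (1 - ρ) * x₀ ≤ 1 - ρ := mul_le_of_le_one_right (by linarith [hρ.2]) hD.1.2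
    have hv1 : ρ * xc ≤ ρ := mul_le_of_le_one_right hρ.1 hD.2.1.2
    have hs0 : 0 ≤ (1 - ρ) * x₀ + ρ * xc := by linarith
    have hs1 : (1 - ρ) * x₀ + ρ * xc ≤ 1 := by linarith
    have hηneg : -η ≤ min (1 / 2 : ℝ) (c / 2) := by linarith
    have hηM : -(2 * η * ((1 - ρ) * x₀ + ρ * xc)) ≤
        2 * min (1 / 2 : ℝ) (c / 2) * ((1 - ρ) * x₀ + ρ * xc) := by nlinarith
    rcases le_or_gt ((1 - ρ) * x₀ + ρ * xc)
        (min (1 / 2 : ℝ) (Real.exp (-(2 * Cb l r p + 2)))) with hcase | hcase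
    · have hsb := small_bound l r hl hlr p ρ hρ x₀ xc y hD hcase
      have h2M : 2 * min (1 / 2 : ℝ) (c / 2) * ((1 - ρ) * x₀ + ρ * xc) ≤
          ((1 - ρ) * x₀ + ρ * xc) := by
        have h1 := min_le_left (1 / 2 : ℝ) (c / 2)
        nlinarith
      linarith
    · have hsb := hbig x₀ xc y hD hcase.le
      have h2M : 2 * min (1 / 2 : ℝ) (c / 2) * ((1 - ρ) * x₀ + ρ * xc) ≤ c := by
        have h1 := min_le_right (1 / 2 : ℝ) (c / 2)
        nlinarith
      linarith
  have hmem0 : memD r ρ 0 0 0 := by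
    refine ⟨?_, ?_, fun t => ?_, ?_, ?_⟩ <;> simp
  have h0mem : (0 : ℝ) ∈ {z : ℝ | ∃ (x₀ xc : ℝ) (y : Fin (r / 2) → ℝ), memD r ρ x₀ xc y ∧
      z = fFun l r x₀ xc y ρ + kFun x₀ xc ρ p - 2 * η * ((1 - ρ) * x₀ + ρ * xc)} := by
    refine ⟨0, 0, 0, hmem0, ?_⟩
    have h0 := fk0 l r p ρ
    simp only [mul_zero, add_zero, zero_add]
    linarith
  have hub : ∀ z ∈ {z : ℝ | ∃ (x₀ xc : ℝ) (y : Fin (r / 2) → ℝ), memD r ρ x₀ xc y ∧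
      z = fFun l r x₀ xc y ρ + kFun x₀ xc ρ p - 2 * η * ((1 - ρ) * x₀ + ρ * xc)}, z ≤ 0 := by
    rintro z ⟨x₀, xc, y, hD, rfl⟩
    exact hpoint x₀ xc y hD
  unfold alphaBSC
  apply le_antisymm
  · exact Real.sSup_le hub le_rfl
  · exact le_csSup ⟨0, fun z hz => hub z hz⟩ h0mem
end
end

section
/- Fix integers 3 ≤ l < r and p ∈ (0,1). For ρ ∈ [0,1] define α^BSC(ρ,0) = max_{(x₀,x_c,y)∈D(ρ)} [f(x₀,x_c,y,ρ) + k(x₀,x_c,ρ,p)]. Suppose α^BSC(ρ,0) = 0 and the maximum is achieved only at the point (0,0,0). Then there exists N such that for all n ≥ N and all δ ∈ [−√(ln n / n), √(ln n / n)] with ρ + δ ∈ [0,1], one has α^BSC(ρ+δ,0) = 0. -/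
open Finset

noncomputable section

set_option maxHeartbeats 1000000

namespace AlphaHelper

lemma continuous_h2 : Continuous h2 := by
  unfold h2
  have h1 : Continuous fun x : ℝ => -x * Real.log x := by
    simpa only [neg_mul, Pi.neg_def] using Real.continuous_mul_log.neg
  exact h1.sub (Real.continuous_mul_log.comp (continuous_const.sub continuous_id))

lemma memD_zero (r : ℕ) (ρ : ℝ) : memD r ρ 0 0 0 := by
  refine ⟨by simp, by simp, fun t => by simp, by simp, by simp⟩

lemma fFun_zero (l r : ℕ) (ρ : ℝ) : fFun l r 0 0 0 ρ = 0 := by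
  simp [fFun, h2]

lemma kFun_zero (ρ p : ℝ) : kFun 0 0 ρ p = 0 := by simp [kFun]

lemma alpha_eq_zero_of_le (l r : ℕ) (p ρ' : ℝ)
    (h : ∀ x₀ xc y, memD r ρ' x₀ xc y → fFun l r x₀ xc y ρ' + kFun x₀ xc ρ' p ≤ 0) :
    alphaBSC l r p ρ' 0 = 0 := by
  unfold alphaBSC
  have hset : ∀ z ∈ {z : ℝ | ∃ (x₀ xc : ℝ) (y : Fin (r / 2) → ℝ), memD r ρ' x₀ xc y ∧
      z = fFun l r x₀ xc y ρ' + kFun x₀ xc ρ' p - 2 * 0 * ((1 - ρ') * x₀ + ρ' * xc)},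
      z ≤ 0 := by
    rintro z ⟨x₀, xc, y, hmem, rfl⟩
    have := h x₀ xc y hmem
    simp only [mul_zero, zero_mul, sub_zero]
    linarith
  refine le_antisymm (Real.sSup_le hset le_rfl) ?_
  refine le_csSup ⟨0, fun z hz => hset z hz⟩ ?_
  exact ⟨0, 0, 0, memD_zero r ρ', by simp [fFun_zero, kFun_zero]⟩


lemma h2_zero : h2 0 = 0 := by simp [h2]

lemma h2_eq_binEntropy (x : ℝ) : h2 x = Real.binEntropy x := by
  unfold h2 Real.binEntropy; rw [Real.log_inv, Real.log_inv]; ring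

lemma choose_le_two_pow' (n k : ℕ) : n.choose k ≤ 2 ^ n := by
  rcases le_or_gt k n with h | h
  · calc n.choose k ≤ ∑ m ∈ range (n + 1), n.choose m :=
        Finset.single_le_sum (f := fun m => n.choose m) (fun _ _ => Nat.zero_le _)
          (mem_range.2 (Nat.lt_succ_of_le h))
    _ = 2 ^ n := Nat.sum_range_choose n
  · simp [Nat.choose_eq_zero_of_lt h]

lemma near (l r : ℕ) (hl : 3 ≤ l) (hlr : l < r) (p : ℝ) :
    ∃ ε : ℝ, 0 < ε ∧ ∀ ρ' x₀ xc (y : Fin (r / 2) → ℝ), ρ' ∈ Set.Icc (0 : ℝ) 1 →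
      memD r ρ' x₀ xc y → (∑ t, y t) ≤ ε →
      fFun l r x₀ xc y ρ' + kFun x₀ xc ρ' p ≤ 0 := by
  have hr0 : 0 < r := by omega
  have hr0R : (0 : ℝ) < r := by exact_mod_cast hr0
  have hl2 : (1 : ℝ) ≤ (l : ℝ) - 2 := by
    have : (3 : ℝ) ≤ l := by exact_mod_cast hl
    linarith
  set L : ℝ := |Real.log ((1 - p) / p)| with hLdef
  set T : ℝ := ((r / 2 : ℕ) : ℝ) with hTdef
  set C₀ : ℝ := (l : ℝ) / r + (l : ℝ) / r * T + (l : ℝ) * Real.log 2 + L with hC₀def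
  refine ⟨Real.exp (-(C₀ * r) / ((l : ℝ) - 2)), Real.exp_pos _, ?_⟩
  intro ρ' x₀ xc y hρ' hmem hsε
  obtain ⟨hx₀, hxc, hy, hs1, hcon⟩ := hmem
  have hρ'0 : 0 ≤ ρ' := hρ'.1
  have hρ'1 : ρ' ≤ 1 := hρ'.2
  have hyt0 : ∀ t, 0 ≤ y t := fun t => (hy t).1
  have hs0 : (0 : ℝ) ≤ ∑ t, y t := Finset.sum_nonneg fun t _ => hyt0 t
  unfold fFun kFun
  set s := ∑ t, y t with hsdef
  set m := (1 - ρ') * x₀ + ρ' * xc with hmdef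
  clear_value s m
  have h2t_le : ∀ t : Fin (r / 2), 2 * ((t : ℕ) + 1) ≤ r := by
    intro t; have ht := t.2; omega
  have hm_le : m ≤ s := by
    rw [← hcon, hsdef]
    apply Finset.sum_le_sum
    intro t _
    have hc1 : (2 * ((t : ℕ) + 1) : ℝ) / r ≤ 1 := by
      rw [div_le_one hr0R]
      exact_mod_cast h2t_le t
    exact mul_le_of_le_one_left (hyt0 t) hc1
  have hm_ge : 2 / (r : ℝ) * s ≤ m := by
    rw [← hcon, hsdef, Finset.mul_sum]
    apply Finset.sum_le_sum
    intro t _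
    refine mul_le_mul_of_nonneg_right ?_ (hyt0 t)
    refine (div_le_div_iff_of_pos_right hr0R).mpr ?_
    have h0t : (0 : ℝ) ≤ ((t : ℕ) : ℝ) := Nat.cast_nonneg _
    nlinarith
  -- case s = 0
  rcases eq_or_lt_of_le hs0 with hseq | hspos
  · have hy0 : ∀ t, y t = 0 := by
      intro t
      have hsum0' : ∑ t, y t = 0 := by rw [← hsdef]; exact hseq.symm
      have := (Finset.sum_eq_zero_iff_of_nonneg (fun i _ => hyt0 i)).1 hsum0'
      exact this t (mem_univ t)
    have hsum0 : s = 0 := hseq.symm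
    have hm0 : m = 0 := le_antisymm (by rw [hsum0] at hm_le; exact hm_le)
      (by nlinarith [mul_nonneg (by linarith : (0:ℝ) ≤ 1 - ρ') hx₀.1,
        mul_nonneg hρ'0 hxc.1])
    have ha0 : (1 - ρ') * x₀ = 0 := by
      have h1 : 0 ≤ (1 - ρ') * x₀ := mul_nonneg (by linarith) hx₀.1
      have h2' : 0 ≤ ρ' * xc := mul_nonneg hρ'0 hxc.1
      rw [hmdef] at hm0; linarith
    have hb0 : ρ' * xc = 0 := by
      have h1 : 0 ≤ (1 - ρ') * x₀ := mul_nonneg (by linarith) hx₀.1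
      rw [hmdef] at hm0; linarith
    have hA : (1 - ρ') * h2 x₀ = 0 := by
      rcases mul_eq_zero.1 ha0 with h | h
      · rw [h, zero_mul]
      · rw [h, h2_zero, mul_zero]
    have hB : ρ' * h2 xc = 0 := by
      rcases mul_eq_zero.1 hb0 with h | h
      · rw [h, zero_mul]
      · rw [h, h2_zero, mul_zero]
    have hsl : ∑ t, y t * Real.log (y t) = 0 :=
      Finset.sum_eq_zero fun t _ => by rw [hy0 t, zero_mul]
    have hsc : ∑ t : Fin (r / 2), y t * Real.log (Nat.choose r (2 * ((t : ℕ) + 1))) = 0 :=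
      Finset.sum_eq_zero fun t _ => by rw [hy0 t, zero_mul]
    rw [hm0, hsl, hsc, hsum0, hA, hB, ha0, hb0, h2_zero]
    simp
  -- main case s > 0
  have hs1' : s ≤ 1 := hs1
  have hlogs_np : Real.log s ≤ 0 := Real.log_nonpos hs0 hs1'
  have hmpos : 0 < m := lt_of_lt_of_le (by positivity) hm_ge
  have hm1 : m ≤ 1 := le_trans hm_le hs1'
  -- E1
  have hjen : (1 - ρ') * h2 x₀ + ρ' * h2 xc ≤ h2 m := by
    have hcc := (Real.strictConcave_binEntropy.concaveOn).2 hx₀ hxc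
      (by linarith : (0:ℝ) ≤ 1 - ρ') hρ'0 (by ring)
    rw [hmdef, h2_eq_binEntropy, h2_eq_binEntropy, h2_eq_binEntropy]
    simpa [smul_eq_mul] using hcc
  have hh2m : -(m * Real.log m) ≤ h2 m := by
    have heq : h2 m = -(m * Real.log m) - (1 - m) * Real.log (1 - m) := by
      unfold h2; ring
    have hnp : (1 - m) * Real.log (1 - m) ≤ 0 :=
      mul_nonpos_of_nonneg_of_nonpos (by linarith) (Real.log_nonpos (by linarith) (by linarith))
    linarith
  have hE1 : -(l : ℝ) * h2 m + (1 - ρ') * h2 x₀ + ρ' * h2 xc ≤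
      ((l : ℝ) - 1) * (2 * s / r * Real.log s) := by
    have hc : (0 : ℝ) ≤ (l : ℝ) - 1 := by linarith
    have step2 : -(((l : ℝ) - 1) * h2 m) ≤ ((l : ℝ) - 1) * (m * Real.log m) := by
      have := mul_le_mul_of_nonneg_left (by linarith [hh2m] : -h2 m ≤ m * Real.log m) hc
      have heq : ((l : ℝ) - 1) * -h2 m = -(((l : ℝ) - 1) * h2 m) := by ring
      linarith
    have step3 : m * Real.log m ≤ 2 * s / r * Real.log s := by
      have hlm : Real.log m ≤ Real.log s := Real.log_le_log hmpos hm_le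
      have h1 : m * Real.log m ≤ m * Real.log s := mul_le_mul_of_nonneg_left hlm hmpos.le
      have h2' : m * Real.log s ≤ (2 / (r : ℝ) * s) * Real.log s :=
        mul_le_mul_of_nonpos_right hm_ge hlogs_np
      have heq : (2 / (r : ℝ) * s) * Real.log s = 2 * s / r * Real.log s := by ring
      linarith
    have step4 : ((l : ℝ) - 1) * (m * Real.log m) ≤ ((l : ℝ) - 1) * (2 * s / r * Real.log s) :=
      mul_le_mul_of_nonneg_left step3 hc
    linarith [hjen]
  -- E2
  have hE2 : -((l : ℝ) / r * ((1 - s) * Real.log (1 - s))) ≤ (l : ℝ) / r * s := by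
    have hbase : -((1 - s) * Real.log (1 - s)) ≤ s := by
      rcases eq_or_lt_of_le hs1' with h1 | h1
      · rw [h1]; norm_num
      · have h1s : 0 < 1 - s := by linarith
        have hlog := Real.log_le_sub_one_of_pos (inv_pos.2 h1s)
        rw [Real.log_inv] at hlog
        have hmul := mul_le_mul_of_nonneg_left hlog h1s.le
        have he : (1 - s) * ((1 - s)⁻¹ - 1) = s := by field_simp; ring
        nlinarith
    have hlr0 : (0 : ℝ) ≤ (l : ℝ) / r := by positivity
    have := mul_le_mul_of_nonneg_left hbase hlr0
    have heq : (l : ℝ) / r * -((1 - s) * Real.log (1 - s)) =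
      -((l : ℝ) / r * ((1 - s) * Real.log (1 - s))) := by ring
    linarith
  -- E3
  have hE3 : -((l : ℝ) / r * ∑ t, y t * Real.log (y t)) ≤
      (l : ℝ) / r * (T * s - s * Real.log s) := by
    have hterm : ∀ t ∈ (univ : Finset (Fin (r / 2))),
        -(y t * Real.log (y t)) ≤ s - y t * Real.log s := by
      intro t _
      rcases eq_or_lt_of_le (hyt0 t) with h0 | hpos
      · rw [← h0]; simp [hs0]
      · have hlog : Real.log (s / y t) ≤ s / y t - 1 :=
          Real.log_le_sub_one_of_pos (by positivity)
        rw [Real.log_div (ne_of_gt hspos) (ne_of_gt hpos)] at hlog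
        have hmul := mul_le_mul_of_nonneg_left hlog hpos.le
        have he1 : y t * (s / y t - 1) = s - y t := by field_simp
        have he2 : y t * (Real.log s - Real.log (y t)) =
          y t * Real.log s - y t * Real.log (y t) := by ring
        linarith [hmul, he1, he2, hyt0 t]
    have hsum : -(∑ t, y t * Real.log (y t)) ≤ T * s - s * Real.log s := by
      have h1 : -(∑ t, y t * Real.log (y t)) = ∑ t, -(y t * Real.log (y t)) := by
        rw [← Finset.sum_neg_distrib]
      have h2' : ∑ t, (s - y t * Real.log s) = T * s - s * Real.log s := by
        rw [Finset.sum_sub_distrib, Finset.sum_const, ← Finset.sum_mul, ← hsdef]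
        simp only [card_univ, Fintype.card_fin, nsmul_eq_mul, hTdef]
      rw [h1, ← h2']
      exact Finset.sum_le_sum hterm
    have hlr0 : (0 : ℝ) ≤ (l : ℝ) / r := by positivity
    have := mul_le_mul_of_nonneg_left hsum hlr0
    have heq : (l : ℝ) / r * -(∑ t, y t * Real.log (y t)) =
      -((l : ℝ) / r * ∑ t, y t * Real.log (y t)) := by ring
    linarith
  -- E4
  have hE4 : (l : ℝ) / r * ∑ t : Fin (r / 2),
      y t * Real.log (Nat.choose r (2 * ((t : ℕ) + 1))) ≤ (l : ℝ) * Real.log 2 * s := by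
    have hterm : ∀ t ∈ (univ : Finset (Fin (r / 2))),
        y t * Real.log (Nat.choose r (2 * ((t : ℕ) + 1))) ≤ y t * ((r : ℝ) * Real.log 2) := by
      intro t _
      refine mul_le_mul_of_nonneg_left ?_ (hyt0 t)
      have hpos : (0 : ℝ) < (Nat.choose r (2 * ((t : ℕ) + 1)) : ℝ) := by
        exact_mod_cast Nat.choose_pos (h2t_le t)
      have hle : (Nat.choose r (2 * ((t : ℕ) + 1)) : ℝ) ≤ (2 : ℝ) ^ r := by
        exact_mod_cast choose_le_two_pow' r (2 * ((t : ℕ) + 1))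
      calc Real.log (Nat.choose r (2 * ((t : ℕ) + 1)) : ℝ)
          ≤ Real.log ((2 : ℝ) ^ r) := Real.log_le_log hpos hle
        _ = (r : ℝ) * Real.log 2 := Real.log_pow 2 r
    have hsum : ∑ t : Fin (r / 2), y t * Real.log (Nat.choose r (2 * ((t : ℕ) + 1))) ≤
        s * ((r : ℝ) * Real.log 2) := by
      calc ∑ t : Fin (r / 2), y t * Real.log (Nat.choose r (2 * ((t : ℕ) + 1)))
          ≤ ∑ t, y t * ((r : ℝ) * Real.log 2) := Finset.sum_le_sum hterm
        _ = s * ((r : ℝ) * Real.log 2) := by rw [← Finset.sum_mul, ← hsdef]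
    have hlr0 : (0 : ℝ) ≤ (l : ℝ) / r := by positivity
    have := mul_le_mul_of_nonneg_left hsum hlr0
    have heq : (l : ℝ) / r * (s * ((r : ℝ) * Real.log 2)) = (l : ℝ) * Real.log 2 * s := by
      field_simp
    linarith
  -- E5
  have hE5 : (ρ' * xc - (1 - ρ') * x₀) * Real.log ((1 - p) / p) ≤ s * L := by
    have ha : 0 ≤ ρ' * xc := mul_nonneg hρ'0 hxc.1
    have hb : 0 ≤ (1 - ρ') * x₀ := mul_nonneg (by linarith) hx₀.1
    have habm : ρ' * xc + (1 - ρ') * x₀ = m := by rw [hmdef]; ring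
    have habs : |ρ' * xc - (1 - ρ') * x₀| ≤ s := by
      rw [abs_sub_le_iff]
      constructor <;> linarith [hm_le]
    calc (ρ' * xc - (1 - ρ') * x₀) * Real.log ((1 - p) / p)
        ≤ |(ρ' * xc - (1 - ρ') * x₀) * Real.log ((1 - p) / p)| := le_abs_self _
      _ = |ρ' * xc - (1 - ρ') * x₀| * L := by rw [abs_mul, hLdef]
      _ ≤ s * L := mul_le_mul_of_nonneg_right habs (abs_nonneg _)
  -- final combination
  have hfinal : ((l : ℝ) - 1) * (2 * s / r * Real.log s) + (l : ℝ) / r * s +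
      (l : ℝ) / r * (T * s - s * Real.log s) + (l : ℝ) * Real.log 2 * s + s * L ≤ 0 := by
    have hlogsε : Real.log s ≤ -(C₀ * r) / ((l : ℝ) - 2) := by
      have := Real.log_le_log hspos hsε
      rwa [Real.log_exp] at this
    have hcoef : (0 : ℝ) ≤ ((l : ℝ) - 2) / r := by positivity
    have hbr : ((l : ℝ) - 2) / r * Real.log s ≤ ((l : ℝ) - 2) / r * (-(C₀ * r) / ((l : ℝ) - 2)) :=
      mul_le_mul_of_nonneg_left hlogsε hcoef
    have heq2 : ((l : ℝ) - 2) / r * (-(C₀ * r) / ((l : ℝ) - 2)) = -C₀ := by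
      field_simp
    have hbr2 : ((l : ℝ) - 2) / r * Real.log s + C₀ ≤ 0 := by
      rw [heq2] at hbr; linarith
    have heq3 : ((l : ℝ) - 1) * (2 * s / r * Real.log s) + (l : ℝ) / r * s +
        (l : ℝ) / r * (T * s - s * Real.log s) + (l : ℝ) * Real.log 2 * s + s * L =
        s * (((l : ℝ) - 2) / r * Real.log s + C₀) := by
      rw [hC₀def]; field_simp; ring
    rw [heq3]
    exact mul_nonpos_of_nonneg_of_nonpos hs0 hbr2
  linarith [hE1, hE2, hE3, hE4, hE5, hfinal]

end AlphaHelper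

/-- **Lemma 2 (BSC case).**  If `α^BSC(ρ,0) = 0` and the maximum over `D(ρ)`
is achieved only at `(0,0,0)`, then for all sufficiently large `n`, for every
`δ ∈ [-√(ln n / n), √(ln n / n)]` with `ρ + δ ∈ [0,1]`, one still has
`α^BSC(ρ+δ, 0) = 0`. -/
theorem alphaBSC_stable_under_perturbation (l r : ℕ) (hl : 3 ≤ l) (hlr : l < r)
    (p : ℝ) (hp : p ∈ Set.Ioo (0 : ℝ) 1) (ρ : ℝ) (hρ : ρ ∈ Set.Icc (0 : ℝ) 1)
    (hzero : alphaBSC l r p ρ 0 = 0)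
    (hmax : ∀ (x₀ xc : ℝ) (y : Fin (r / 2) → ℝ), memD r ρ x₀ xc y →
      ¬(x₀ = 0 ∧ xc = 0 ∧ y = 0) →
      fFun l r x₀ xc y ρ + kFun x₀ xc ρ p < fFun l r 0 0 0 ρ + kFun 0 0 ρ p) :
    ∃ N : ℕ, ∀ n : ℕ, N ≤ n → ∀ δ : ℝ,
      -Real.sqrt (Real.log n / n) ≤ δ → δ ≤ Real.sqrt (Real.log n / n) →
      ρ + δ ∈ Set.Icc (0 : ℝ) 1 → alphaBSC l r p (ρ + δ) 0 = 0 := by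
  obtain ⟨ε, hε, hnear⟩ := AlphaHelper.near l r hl hlr p
  -- continuity of the objective as a function of ((x₀, xc, y), ρ')
  set G : (ℝ × ℝ × (Fin (r / 2) → ℝ)) × ℝ → ℝ :=
    fun z => fFun l r z.1.1 z.1.2.1 z.1.2.2 z.2 + kFun z.1.1 z.1.2.1 z.2 p with hGdef
  have cx0 : Continuous fun z : (ℝ × ℝ × (Fin (r / 2) → ℝ)) × ℝ => z.1.1 :=
    continuous_fst.fst
  have cxc : Continuous fun z : (ℝ × ℝ × (Fin (r / 2) → ℝ)) × ℝ => z.1.2.1 :=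
    continuous_fst.snd.fst
  have cρ : Continuous fun z : (ℝ × ℝ × (Fin (r / 2) → ℝ)) × ℝ => z.2 := continuous_snd
  have cy : ∀ t : Fin (r / 2),
      Continuous fun z : (ℝ × ℝ × (Fin (r / 2) → ℝ)) × ℝ => z.1.2.2 t :=
    fun t => (continuous_apply t).comp continuous_fst.snd.snd
  have cs : Continuous fun z : (ℝ × ℝ × (Fin (r / 2) → ℝ)) × ℝ => ∑ t, z.1.2.2 t :=
    continuous_finset_sum _ fun t _ => cy t
  have cm : Continuous fun z : (ℝ × ℝ × (Fin (r / 2) → ℝ)) × ℝ =>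
      (1 - z.2) * z.1.1 + z.2 * z.1.2.1 :=
    ((continuous_const.sub cρ).mul cx0).add (cρ.mul cxc)
  have hGc : Continuous G := by
    rw [hGdef]
    unfold fFun kFun
    refine Continuous.add ?_ (((cρ.mul cxc).sub ((continuous_const.sub cρ).mul cx0)).mul
      continuous_const)
    refine Continuous.add ?_ (continuous_const.mul
      (continuous_finset_sum _ fun t _ => (cy t).mul continuous_const))
    refine Continuous.sub ?_ (continuous_const.mul
      (continuous_finset_sum _ fun t _ => Real.continuous_mul_log.comp (cy t)))
    refine Continuous.sub ?_ (continuous_const.mul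
      (Real.continuous_mul_log.comp (continuous_const.sub cs)))
    exact ((continuous_const.mul (AlphaHelper.continuous_h2.comp cm)).add
      ((continuous_const.sub cρ).mul (AlphaHelper.continuous_h2.comp cx0))).add
      (cρ.mul (AlphaHelper.continuous_h2.comp cxc))
  -- the compact "far" region
  set K : Set ((ℝ × ℝ × (Fin (r / 2) → ℝ)) × ℝ) :=
    {z | memD r z.2 z.1.1 z.1.2.1 z.1.2.2 ∧ z.2 ∈ Set.Icc (0 : ℝ) 1 ∧
      ε ≤ ∑ t, z.1.2.2 t ∧ 0 ≤ G z} with hKdef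
  have hKcl : IsClosed K := by
    have h1 : IsClosed {z : (ℝ × ℝ × (Fin (r / 2) → ℝ)) × ℝ | z.1.1 ∈ Set.Icc (0:ℝ) 1} :=
      isClosed_Icc.preimage cx0
    have h2' : IsClosed {z : (ℝ × ℝ × (Fin (r / 2) → ℝ)) × ℝ | z.1.2.1 ∈ Set.Icc (0:ℝ) 1} :=
      isClosed_Icc.preimage cxc
    have h3 : IsClosed {z : (ℝ × ℝ × (Fin (r / 2) → ℝ)) × ℝ |
        ∀ t, z.1.2.2 t ∈ Set.Icc (0:ℝ) 1} := by
      have : {z : (ℝ × ℝ × (Fin (r / 2) → ℝ)) × ℝ | ∀ t, z.1.2.2 t ∈ Set.Icc (0:ℝ) 1} =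
          ⋂ t, {z | z.1.2.2 t ∈ Set.Icc (0:ℝ) 1} := by
        ext z; simp
      rw [this]
      exact isClosed_iInter fun t => isClosed_Icc.preimage (cy t)
    have h4 : IsClosed {z : (ℝ × ℝ × (Fin (r / 2) → ℝ)) × ℝ | (∑ t, z.1.2.2 t) ≤ 1} :=
      isClosed_le cs continuous_const
    have h5 : IsClosed {z : (ℝ × ℝ × (Fin (r / 2) → ℝ)) × ℝ |
        (∑ t : Fin (r / 2), (2 * ((t : ℕ) + 1) : ℝ) / (r : ℝ) * z.1.2.2 t) =
        (1 - z.2) * z.1.1 + z.2 * z.1.2.1} :=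
      isClosed_eq (continuous_finset_sum _ fun t _ => continuous_const.mul (cy t)) cm
    have h6 : IsClosed {z : (ℝ × ℝ × (Fin (r / 2) → ℝ)) × ℝ | z.2 ∈ Set.Icc (0:ℝ) 1} :=
      isClosed_Icc.preimage cρ
    have h7 : IsClosed {z : (ℝ × ℝ × (Fin (r / 2) → ℝ)) × ℝ | ε ≤ ∑ t, z.1.2.2 t} :=
      isClosed_le continuous_const cs
    have h8 : IsClosed {z : (ℝ × ℝ × (Fin (r / 2) → ℝ)) × ℝ | 0 ≤ G z} :=
      isClosed_le continuous_const hGc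
    have hKeq : K = {z : (ℝ × ℝ × (Fin (r / 2) → ℝ)) × ℝ | z.1.1 ∈ Set.Icc (0:ℝ) 1} ∩
        ({z | z.1.2.1 ∈ Set.Icc (0:ℝ) 1} ∩ ({z | ∀ t, z.1.2.2 t ∈ Set.Icc (0:ℝ) 1} ∩
        ({z | (∑ t, z.1.2.2 t) ≤ 1} ∩ ({z |
          (∑ t : Fin (r / 2), (2 * ((t : ℕ) + 1) : ℝ) / (r : ℝ) * z.1.2.2 t) =
          (1 - z.2) * z.1.1 + z.2 * z.1.2.1} ∩ ({z | z.2 ∈ Set.Icc (0:ℝ) 1} ∩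
        ({z | ε ≤ ∑ t, z.1.2.2 t} ∩ {z | 0 ≤ G z})))))) := by
      ext z
      simp only [hKdef, memD, Set.mem_setOf_eq, Set.mem_inter_iff]
      tauto
    rw [hKeq]
    exact h1.inter (h2'.inter (h3.inter (h4.inter (h5.inter (h6.inter (h7.inter h8))))))
  have hKcompact : IsCompact K := by
    have hbox : IsCompact ((Set.Icc (0:ℝ) 1 ×ˢ (Set.Icc (0:ℝ) 1 ×ˢ
        (Set.pi Set.univ fun _ : Fin (r / 2) => Set.Icc (0:ℝ) 1))) ×ˢ Set.Icc (0:ℝ) 1) :=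
      ((isCompact_Icc.prod (isCompact_Icc.prod
        (isCompact_univ_pi fun _ : Fin (r / 2) => isCompact_Icc)))).prod isCompact_Icc
    refine IsCompact.of_isClosed_subset hbox hKcl ?_
    rintro ⟨⟨x₀, xc, y⟩, ρ'⟩ ⟨⟨hh1, hh2, hh3, _, _⟩, hρ', _, _⟩
    exact ⟨⟨hh1, hh2, fun t _ => hh3 t⟩, hρ'⟩
  -- uniform gap away from ρ for points in K
  obtain ⟨δ₀, hδ₀, hKfar⟩ : ∃ δ₀ : ℝ, 0 < δ₀ ∧ ∀ z ∈ K, δ₀ ≤ |z.2 - ρ| := by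
    by_cases hne : K.Nonempty
    · obtain ⟨z₀, hz₀K, hmin⟩ := hKcompact.exists_isMinOn hne
        (((cρ.sub continuous_const).abs).continuousOn :
          ContinuousOn (fun z : (ℝ × ℝ × (Fin (r / 2) → ℝ)) × ℝ => |z.2 - ρ|) K)
      refine ⟨|z₀.2 - ρ|, ?_, fun z hz => hmin hz⟩
      rcases lt_or_eq_of_le (abs_nonneg (z₀.2 - ρ)) with h | h
      · exact h
      · exfalso
        have h0 : z₀.2 = ρ := by
          have := abs_eq_zero.1 h.symm
          linarith [sub_eq_zero.1 this]
        obtain ⟨hmemz, _, hεz, hGz⟩ := hz₀K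
        rw [h0] at hmemz
        have hy0 : z₀.1.2.2 ≠ 0 := by
          intro hc
          rw [hc] at hεz
          simp only [Pi.zero_apply, Finset.sum_const_zero] at hεz
          linarith
        have hlt := hmax z₀.1.1 z₀.1.2.1 z₀.1.2.2 hmemz (fun hc => hy0 hc.2.2)
        rw [AlphaHelper.fFun_zero, AlphaHelper.kFun_zero] at hlt
        have hGz' : 0 ≤ fFun l r z₀.1.1 z₀.1.2.1 z₀.1.2.2 z₀.2 +
            kFun z₀.1.1 z₀.1.2.1 z₀.2 p := hGz
        rw [h0] at hGz'
        linarith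
    · exact ⟨1, one_pos, fun z hz => absurd ⟨z, hz⟩ hne⟩
  -- choose N so that sqrt (log n / n) < δ₀ for n ≥ N
  have hev : ∀ᶠ x : ℝ in Filter.atTop, ‖Real.log x‖ ≤ δ₀ ^ 2 / 2 * ‖x‖ :=
    Real.isLittleO_log_id_atTop.def (by positivity)
  have hev2 : ∀ᶠ n : ℕ in Filter.atTop, ‖Real.log n‖ ≤ δ₀ ^ 2 / 2 * ‖(n : ℝ)‖ :=
    tendsto_natCast_atTop_atTop.eventually hev
  obtain ⟨N₀, hN₀⟩ := Filter.eventually_atTop.1 hev2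
  refine ⟨max N₀ 1, ?_⟩
  intro n hn δ hδl hδu hρδ
  have hn1 : 1 ≤ n := le_trans (le_max_right _ _) hn
  have hnR : (1 : ℝ) ≤ (n : ℝ) := by exact_mod_cast hn1
  have hlogn : Real.log n / n ≤ δ₀ ^ 2 / 2 := by
    have h := hN₀ n (le_trans (le_max_left _ _) hn)
    rw [Real.norm_eq_abs, Real.norm_eq_abs, abs_of_nonneg (Real.log_nonneg hnR),
      abs_of_nonneg (by linarith : (0:ℝ) ≤ (n:ℝ))] at h
    rw [div_le_iff₀ (by linarith : (0:ℝ) < (n:ℝ))]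
    calc Real.log n ≤ δ₀ ^ 2 / 2 * n := h
      _ = δ₀ ^ 2 / 2 * n := rfl
  have hsq : Real.sqrt (Real.log n / n) < δ₀ := by
    have h1' : Real.sqrt (Real.log n / n) ≤ Real.sqrt (δ₀ ^ 2 / 2) :=
      Real.sqrt_le_sqrt hlogn
    have h2' : Real.sqrt (δ₀ ^ 2 / 2) < Real.sqrt (δ₀ ^ 2) :=
      Real.sqrt_lt_sqrt (by positivity) (by nlinarith)
    rw [Real.sqrt_sq hδ₀.le] at h2'
    linarith
  have habs : |δ| < δ₀ := lt_of_le_of_lt (abs_le.2 ⟨hδl, hδu⟩) hsq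
  apply AlphaHelper.alpha_eq_zero_of_le
  intro x₀ xc y hmem
  rcases le_or_gt (∑ t, y t) ε with hle | hgt
  · exact hnear (ρ + δ) x₀ xc y hρδ hmem hle
  · by_contra hpos
    push_neg at hpos
    have hzK : ((x₀, xc, y), ρ + δ) ∈ K :=
      ⟨hmem, hρδ, hgt.le, le_of_lt hpos⟩
    have := hKfar _ hzK
    simp only [add_sub_cancel_left] at this
    linarith
end
end
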